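/- Let Λ be a local Artinian algebra with J(Λ)² = 0. Then every finitely generated torsionless Λ-module M with Ext¹_Λ(M, M) = 0 is projective. -/

import Mathlib

open CategoryTheory

universe u

noncomputable abbrev ExtGrp (Λ : Type u) [Ring Λ] (M N : ModuleCat.{u} Λ) (n : ℕ) :
    Type u :=
  ((Ext ℤ (ModuleCat.{u} Λ) n).obj (Opposite.op M)).obj N

/-- `M` is torsionless: it embeds into a finitely generated free module. -/
def IsTorsionless (Λ : Type u) [Ring Λ] (M : Type u) [AddCommGroup M]
    [Module Λ M] : Prop :=
  ∃ (n : ℕ) (f : M →ₗ[Λ] (Fin n → Λ)), Function.Injective f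

set_option linter.unusedSectionVars false
set_option maxHeartbeats 1000000

open CategoryTheory.Limits


section LocalFacts
variable {Λ : Type u} [Ring Λ] [IsLocalRing Λ]

lemma locUnit_left {a b : Λ} (h : b * a = 1) : IsUnit a := by
  have e2 : (a * b) * (a * b) = a * b := by
    rw [mul_assoc, ← mul_assoc b a b, h, one_mul]
  rcases IsLocalRing.isUnit_or_isUnit_of_add_one
      (a := a * b) (b := 1 - a * b) (by noncomm_ring) with hu | hu
  · have h10 : (a * b) * (1 - a * b) = (a * b) * 0 := by
      rw [mul_sub, mul_one, e2, mul_zero, sub_self]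
    have hab : a * b = 1 := (sub_eq_zero.mp (hu.mul_left_cancel h10)).symm
    exact ⟨⟨a, b, hab, h⟩, rfl⟩
  · have h0 : (1 - a * b) * a = (1 - a * b) * 0 := by
      rw [sub_mul, one_mul, mul_assoc, h, mul_one, sub_self, mul_zero]
    have ha : a = 0 := hu.mul_left_cancel h0
    exfalso
    apply one_ne_zero (α := Λ)
    rw [← h, ha, mul_zero]

lemma locUnit_right {a b : Λ} (h : a * b = 1) : IsUnit a := by
  have e2 : (b * a) * (b * a) = b * a := by
    rw [mul_assoc, ← mul_assoc a b a, h, one_mul]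
  rcases IsLocalRing.isUnit_or_isUnit_of_add_one
      (a := b * a) (b := 1 - b * a) (by noncomm_ring) with hu | hu
  · have hba : b * a = 1 := by
      have h10 : (b * a) * (1 - b * a) = (b * a) * 0 := by
        rw [mul_sub, mul_one, e2, mul_zero, sub_self]
      exact (sub_eq_zero.mp (hu.mul_left_cancel h10)).symm
    exact ⟨⟨a, b, h, hba⟩, rfl⟩
  · have h0 : (1 - b * a) * b = (1 - b * a) * 0 := by
      rw [sub_mul, one_mul, mul_assoc, h, mul_one, sub_self, mul_zero]
    have hb : b = 0 := hu.mul_left_cancel h0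
    exfalso
    apply one_ne_zero (α := Λ)
    rw [← h, hb, mul_zero]

lemma locUnit_of_not_mem_jacobson {x : Λ} (hx : x ∉ (⊥ : Ideal Λ).jacobson) : IsUnit x := by
  rw [Ideal.jacobson, Submodule.mem_sInf] at hx
  push_neg at hx
  obtain ⟨m, ⟨-, hmax⟩, hxm⟩ := hx
  have hsup : m ⊔ Submodule.span Λ {x} = ⊤ :=
    hmax.out.2 (m ⊔ Submodule.span Λ {x})
      (lt_of_le_of_ne le_sup_left (fun h => hxm (h ▸ (le_sup_right (a := m) (b := Submodule.span Λ {x}) (Submodule.mem_span_singleton_self x)))))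
  have h1 : (1 : Λ) ∈ m ⊔ Submodule.span Λ {x} := hsup ▸ Submodule.mem_top
  rw [Submodule.mem_sup] at h1
  obtain ⟨y, hy, z, hz, hyz⟩ := h1
  rw [Submodule.mem_span_singleton] at hz
  obtain ⟨r, rfl⟩ := hz
  rcases IsLocalRing.isUnit_or_isUnit_of_add_one hyz with hu | hu
  · exact absurd (Ideal.eq_top_of_isUnit_mem m hy hu) hmax.ne_top
  · obtain ⟨u, hu⟩ := hu
    refine locUnit_left (b := ↑u⁻¹ * r) ?_
    rw [mul_assoc, show r * x = ((u : Λ)) from hu.symm, Units.inv_mul]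

lemma loc_jacobson_ne_top : (⊥ : Ideal Λ).jacobson ≠ ⊤ := by
  obtain ⟨m, hm⟩ := Ideal.exists_maximal Λ
  intro h
  have h2 : (⊥ : Ideal Λ).jacobson ≤ m := sInf_le ⟨bot_le, hm⟩
  rw [h] at h2
  exact hm.ne_top (top_le_iff.mp h2)

lemma loc_le_jacobson {I : Ideal Λ} (hI : I ≠ ⊤) : I ≤ (⊥ : Ideal Λ).jacobson := by
  intro x hx
  by_contra hxJ
  exact hI (Ideal.eq_top_of_isUnit_mem I hx (locUnit_of_not_mem_jacobson hxJ))

lemma loc_mul_right_mem {x : Λ} (hx : x ∈ (⊥ : Ideal Λ).jacobson) (y : Λ) :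
    x * y ∈ (⊥ : Ideal Λ).jacobson := by
  by_contra hxy
  obtain ⟨u, hu⟩ := locUnit_of_not_mem_jacobson hxy
  have hux : IsUnit x := locUnit_right (b := y * ↑u⁻¹)
    (by rw [← mul_assoc, ← hu, Units.mul_inv])
  exact loc_jacobson_ne_top (Ideal.eq_top_of_isUnit_mem _ hx hux)


lemma quot_hom_vanish (G : Λ →ₗ[Λ] (Λ ⧸ (⊥ : Ideal Λ).jacobson)) {a : Λ}
    (ha : a ∈ (⊥ : Ideal Λ).jacobson) : G a = 0 := by
  have h1 : G a = a • G 1 := by rw [← map_smul, smul_eq_mul, mul_one]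
  obtain ⟨y, hy⟩ := Submodule.Quotient.mk_surjective _ (G 1)
  rw [h1, ← hy, ← Submodule.Quotient.mk_smul, smul_eq_mul, Submodule.Quotient.mk_eq_zero]
  exact loc_mul_right_mem ha y

end LocalFacts

section LocalFacts
variable {Λ : Type u} [Ring Λ] [IsLocalRing Λ]
section Retract
variable {Λ : Type u} [Ring Λ] [IsLocalRing Λ]
variable {M : Type u} [AddCommGroup M] [Module Λ M]

lemma loc_isCoatom_jacobson : IsCoatom ((⊥ : Ideal Λ).jacobson) := by
  constructor
  · exact loc_jacobson_ne_top
  · intro I hI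
    by_contra hItop
    exact absurd (loc_le_jacobson hItop) (not_le_of_gt hI)

lemma loc_isSimpleModule_quot : IsSimpleModule Λ (Λ ⧸ (⊥ : Ideal Λ).jacobson) :=
  isSimpleModule_iff_isCoatom.mpr loc_isCoatom_jacobson

lemma loc_ker_toSpanSingleton (hJM : ∀ a ∈ (⊥ : Ideal Λ).jacobson, ∀ m : M, a • m = 0)
    {x : M} (hx : x ≠ 0) :
    LinearMap.ker (LinearMap.toSpanSingleton Λ M x) = (⊥ : Ideal Λ).jacobson := by
  apply le_antisymm
  · apply loc_le_jacobson
    intro h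
    apply hx
    have h1 : (1 : Λ) ∈ LinearMap.ker (LinearMap.toSpanSingleton Λ M x) := by
      rw [h]; trivial
    simpa using h1
  · intro a ha
    simp only [LinearMap.mem_ker, LinearMap.toSpanSingleton_apply]
    exact hJM a ha x

lemma loc_isSimpleModule_range (hJM : ∀ a ∈ (⊥ : Ideal Λ).jacobson, ∀ m : M, a • m = 0)
    {x : M} (hx : x ≠ 0) :
    IsSimpleModule Λ (LinearMap.range (LinearMap.toSpanSingleton Λ M x)) := by
  haveI := loc_isSimpleModule_quot (Λ := Λ)
  exact IsSimpleModule.congr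
    (((LinearMap.toSpanSingleton Λ M x).quotKerEquivRange).symm.trans
      (Submodule.quotEquivOfEq _ _ (loc_ker_toSpanSingleton hJM hx)))

lemma loc_isSemisimple (hJM : ∀ a ∈ (⊥ : Ideal Λ).jacobson, ∀ m : M, a • m = 0) :
    IsSemisimpleModule Λ M := by
  apply IsSemisimpleModule.of_sSup_simples_eq_top
  rw [eq_top_iff]
  intro x _
  rcases eq_or_ne x 0 with rfl | hx
  · exact Submodule.zero_mem _
  · have hmem : LinearMap.range (LinearMap.toSpanSingleton Λ M x) ∈
        {m : Submodule Λ M | IsSimpleModule Λ m} := loc_isSimpleModule_range hJM hx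
    exact le_sSup hmem ⟨1, one_smul _ _⟩

lemma loc_retract (hJM : ∀ a ∈ (⊥ : Ideal Λ).jacobson, ∀ m : M, a • m = 0)
    {x : M} (hx : x ≠ 0) :
    ∃ (s : (Λ ⧸ (⊥ : Ideal Λ).jacobson) →ₗ[Λ] M)
      (r : M →ₗ[Λ] (Λ ⧸ (⊥ : Ideal Λ).jacobson)), r ∘ₗ s = LinearMap.id := by
  set f := LinearMap.toSpanSingleton Λ M x with hf
  haveI := loc_isSemisimple hJM
  obtain ⟨q, hq⟩ := ComplementedLattice.exists_isCompl (LinearMap.range f)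
  set e : (Λ ⧸ (⊥ : Ideal Λ).jacobson) ≃ₗ[Λ] LinearMap.range f :=
    (Submodule.quotEquivOfEq _ _ (loc_ker_toSpanSingleton hJM hx).symm).trans
      f.quotKerEquivRange with he
  refine ⟨(LinearMap.range f).subtype ∘ₗ (e : (Λ ⧸ (⊥ : Ideal Λ).jacobson) →ₗ[Λ] _),
    (e.symm : _ →ₗ[Λ] _) ∘ₗ (Submodule.linearProjOfIsCompl _ q hq), ?_⟩
  refine LinearMap.ext fun z => ?_
  simp only [LinearMap.comp_apply, LinearMap.id_apply, Submodule.subtype_apply]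
  erw [Submodule.linearProjOfIsCompl_apply_left hq (e z : LinearMap.range f)]
  exact e.symm_apply_apply z

section LocalFacts
variable {Λ : Type u} [Ring Λ] [IsLocalRing Λ]
section IND
variable {Λ : Type u} [Ring Λ] [IsLocalRing Λ]

/-- Structure of torsionless modules over a local ring with radical square zero. -/
lemma loc_torsionless_structure
    (hJ : ∀ a ∈ (⊥ : Ideal Λ).jacobson, ∀ b ∈ (⊥ : Ideal Λ).jacobson, a * b = 0) :
    ∀ (n : ℕ) (M : Type u) [AddCommGroup M] [Module Λ M]
      (f : M →ₗ[Λ] (Fin n → Λ)), Function.Injective f →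
      (Module.Projective Λ M ∨
        ((⊥ : Ideal Λ).jacobson ≠ ⊥ ∧
          ∃ (s : (Λ ⧸ (⊥ : Ideal Λ).jacobson) →ₗ[Λ] M)
            (r : M →ₗ[Λ] (Λ ⧸ (⊥ : Ideal Λ).jacobson)), r ∘ₗ s = LinearMap.id)) := by
  intro n
  induction n with
  | zero =>
    intro M _ _ f hf
    left
    haveI : Subsingleton M := ⟨fun a b => hf (Subsingleton.elim _ _)⟩
    infer_instance
  | succ n IH =>
    intro M _ _ f hf
    by_cases hcoord : ∀ (m : M) (i : Fin (n+1)), f m i ∈ (⊥ : Ideal Λ).jacobson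
    · -- radical kills M
      have hJM : ∀ a ∈ (⊥ : Ideal Λ).jacobson, ∀ m : M, a • m = 0 := by
        intro a ha m
        apply hf
        rw [map_zero, map_smul]
        funext i
        exact hJ a ha (f m i) (hcoord m i)
      by_cases hM : ∃ x : M, x ≠ 0
      · obtain ⟨x, hx⟩ := hM
        right
        constructor
        · -- J ≠ ⊥
          intro hJbot
          apply hx
          apply hf
          rw [map_zero]
          funext i
          have := hcoord x i
          rw [hJbot] at this
          simpa using this
        · exact loc_retract hJM hx
      · push_neg at hM
        left
        haveI : Subsingleton M := ⟨fun a b => by rw [hM a, hM b]⟩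
        infer_instance
    · -- split off a free rank-one summand
      push_neg at hcoord
      obtain ⟨m₀, i, hmi⟩ := hcoord
      obtain ⟨u, hu⟩ := locUnit_of_not_mem_jacobson hmi
      set g : M →ₗ[Λ] Λ := (LinearMap.proj i) ∘ₗ f with hg
      have hgm₀ : g m₀ = (u : Λ) := hu.symm
      have hgsurj : Function.Surjective g := by
        intro z
        refine ⟨(z * (↑u⁻¹ : Λ)) • m₀, ?_⟩
        rw [map_smul, hgm₀, smul_eq_mul, mul_assoc, Units.inv_mul, mul_one]
      obtain ⟨s, hs⟩ := Module.projective_lifting_property g LinearMap.id hgsurj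
      have hsa : ∀ a, g (s a) = a := fun a => congrFun (congrArg DFunLike.coe hs) a
      -- the complement
      set M' := LinearMap.ker g with hM'
      have hmem : ∀ m : M, ((LinearMap.id : M →ₗ[Λ] M) - s ∘ₗ g) m ∈ M' := by
        intro m
        show g (m - s (g m)) = 0
        rw [map_sub, hsa, sub_self]
      set ρ : M →ₗ[Λ] M' := LinearMap.codRestrict M' ((LinearMap.id : M →ₗ[Λ] M) - s ∘ₗ g) hmem with hρ
      have hρs : ∀ y : M', ρ ((M').subtype y) = y := by
        intro y
        apply Subtype.ext
        show (y : M) - s (g (y : M)) = (y : M)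
        rw [(y.2 : g (y : M) = 0), map_zero, sub_zero]
      -- M' embeds into Λ^n
      set f' : M' →ₗ[Λ] (Fin n → Λ) :=
        LinearMap.pi (fun j => (LinearMap.proj (i.succAbove j)) ∘ₗ f ∘ₗ (M').subtype) with hf'
      have hf'inj : Function.Injective f' := by
        rw [injective_iff_map_eq_zero]
        intro y hy
        have hy0 : (y : M) = 0 := by
          apply hf
          rw [map_zero]
          funext l
          rcases eq_or_ne l i with rfl | hl
          · exact y.2
          · obtain ⟨j, hj⟩ := Fin.exists_succAbove_eq hl
            have hthis : f (y : M) (i.succAbove j) = 0 := congrFun hy j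
            rw [← hj]
            exact hthis
        exact Subtype.ext hy0
      rcases IH M' f' hf'inj with hproj | ⟨hJne, s', r', hsr⟩
      · -- M ≃ Λ × M' is projective
        left
        have e : M ≃ₗ[Λ] Λ × M' := by
          refine LinearEquiv.ofLinear (g.prod ρ)
            ((s ∘ₗ LinearMap.fst Λ Λ M') + ((M').subtype ∘ₗ LinearMap.snd Λ Λ M'))
            (LinearMap.ext ?_) (LinearMap.ext ?_)
          · rintro ⟨a, y⟩
            have h0 : g (y : M) = 0 := y.2
            show (g (s a + (y : M)), ρ (s a + (y : M))) = (a, y)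
            have h1 : g (s a + (y : M)) = a := by rw [map_add, hsa, h0, add_zero]
            have h2 : ρ (s a + (y : M)) = y := by
              apply Subtype.ext
              show (s a + (y : M)) - s (g (s a + (y : M))) = (y : M)
              rw [h1]
              abel
            rw [h1, h2]
          · intro m
            show s (g m) + (m - s (g m)) = m
            abel
        haveI := hproj
        exact Module.Projective.of_equiv e.symm
      · -- retract of M' gives retract of M
        right
        refine ⟨hJne, (M').subtype ∘ₗ s', r' ∘ₗ ρ, ?_⟩
        apply LinearMap.ext
        intro z
        simp only [LinearMap.comp_apply, LinearMap.id_apply]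
        rw [hρs (s' z)]
        exact congrFun (congrArg DFunLike.coe hsr) z

end IND

noncomputable section Resolution
open CategoryTheory.Projective

variable {C : Type (u+1)} [Category.{u} C] [Abelian C] [EnoughProjectives C]
variable {Z P₀ : C} (π : P₀ ⟶ Z) [Projective P₀] [Epi π]

/-- projective resolution starting from a chosen projective cover -/
def resComplex : ChainComplex C ℕ :=
  ChainComplex.mk' P₀ (syzygies π) (d π) (fun f => ⟨_, Projective.d f, (Category.assoc _ _ _).trans ((congrArg _ (kernel.condition f)).trans comp_zero)⟩)

lemma resComplex_d_1_0 : (resComplex π).d 1 0 = d π := by simp [resComplex]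

lemma resComplex_exactAt_succ (n : ℕ) : (resComplex π).ExactAt (n + 1) := by
  rw [HomologicalComplex.exactAt_iff' _ (n + 1 + 1) (n + 1) n (by simp) (by simp)]
  have hE := exact_d_f ((resComplex π).d (n + 1) n)
  refine (ShortComplex.exact_iff_of_iso ?_).2 hE
  refine ShortComplex.isoMk (ChainComplex.mk'XIso P₀ (syzygies π) (d π) (fun f => ⟨_, Projective.d f,
    (Category.assoc _ _ _).trans ((congrArg _ (kernel.condition f)).trans comp_zero)⟩) n)
    (Iso.refl _) (Iso.refl _) ?_ ?_
  · exact (ChainComplex.mk'_d _ _ _ _ n).symm.trans (Category.comp_id _).symm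
  · exact (Category.id_comp _).trans (Category.comp_id _).symm

instance resComplex_projective (n : ℕ) : Projective ((resComplex π).X n) := by
  obtain (_ | _ | _ | n) := n
  · exact inferInstanceAs (Projective P₀)
  all_goals apply Projective.projective_over

/-- A projective resolution with chosen start. -/
def resOf : ProjectiveResolution Z where
  complex := resComplex π
  π := (ChainComplex.toSingle₀Equiv _ _).symm ⟨π, by
        rw [resComplex_d_1_0]; exact (Category.assoc _ _ _).trans ((congrArg _ (kernel.condition π)).trans comp_zero)⟩
  quasiIso := ⟨fun n => by
    cases n
    · rw [ChainComplex.quasiIsoAt₀_iff, ShortComplex.quasiIso_iff_of_zeros']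
      · refine (ShortComplex.exact_and_epi_g_iff_of_iso ?_).2
          ⟨exact_d_f π, by dsimp; infer_instance⟩
        exact ShortComplex.isoMk (Iso.refl _) (Iso.refl _) (Iso.refl _)
          (by simp [resComplex]; exact (Category.id_comp _).trans (Category.comp_id _).symm) (by simp; erw [Category.id_comp, Category.comp_id, ChainComplex.toSingle₀Equiv_symm_apply_f_zero])
      all_goals rfl
    · rw [quasiIsoAt_iff_exactAt']
      · apply resComplex_exactAt_succ
      · apply ChainComplex.exactAt_succ_single_obj⟩

lemma resOf_complex_X0 : (resOf π).complex.X 0 = P₀ := rfl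
lemma resOf_complex_X1 : (resOf π).complex.X 1 = syzygies π := rfl

end Resolution

noncomputable section Ext1
open CategoryTheory.Projective
variable {Λ : Type u} [Ring Λ]

lemma ext1_lifting {Z P₀ Y : ModuleCat.{u} Λ} (π : P₀ ⟶ Z) [Projective P₀] [Epi π]
    (h : Subsingleton (((Ext ℤ (ModuleCat.{u} Λ) 1).obj (Opposite.op Z)).obj Y))
    (ψ : kernel π ⟶ Y) : ∃ g : P₀ ⟶ Y, kernel.ι π ≫ g = ψ := by
  set P := resOf π with hP
  set L := P.complex.linearYonedaObj ℤ Y with hL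
  have hiso := P.isoExt (R := ℤ) 1 Y
  haveI hsub : Subsingleton (L.homology 1) :=
    (((forget (ModuleCat ℤ)).mapIso hiso).toEquiv.symm).subsingleton
  have hz : IsZero (L.homology 1) := ModuleCat.isZero_of_subsingleton _
  have hex : L.ExactAt 1 := (HomologicalComplex.exactAt_iff_isZero_homology _ _).mpr hz
  rw [HomologicalComplex.exactAt_iff' L 0 1 2 (by simp) (by simp)] at hex
  rw [ShortComplex.moduleCat_exact_iff] at hex
  -- the cocycle
  set q : (P.complex.X 1) ⟶ kernel π := Projective.π (kernel π) with hq
  have hd10 : P.complex.d 1 0 = q ≫ kernel.ι π := resComplex_d_1_0 π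
  have hdq : P.complex.d 2 1 ≫ q = 0 := by
    have h1 : P.complex.d 2 1 ≫ P.complex.d 1 0 = 0 := P.complex.d_comp_d 2 1 0
    erw [hd10, ← Category.assoc] at h1
    exact (cancel_mono (kernel.ι π)).mp
      (show (P.complex.d 2 1 ≫ q) ≫ kernel.ι π = 0 ≫ kernel.ι π by rw [zero_comp]; exact h1)
  set φ : (L.sc' 0 1 2).X₂ := (q ≫ ψ : (P.complex.X 1) ⟶ Y) with hφ
  have hgφ : (L.sc' 0 1 2).g φ = 0 := by
    show P.complex.d 2 1 ≫ (q ≫ ψ) = 0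
    rw [← Category.assoc, hdq, zero_comp]
  obtain ⟨γ, hγ⟩ := hex φ hgφ
  refine ⟨(γ : (P.complex.X 0) ⟶ Y), ?_⟩
  have hγ' : P.complex.d 1 0 ≫ (γ : (P.complex.X 0) ⟶ Y) = q ≫ ψ := hγ
  erw [hd10, Category.assoc] at hγ'
  haveI : Epi q := inferInstanceAs (Epi (Projective.π (kernel π)))
  exact (cancel_epi q).mp hγ'

end Ext1
variable {Λ : Type u} [Ring Λ]

lemma ext_subsingleton_retract {A B : ModuleCat.{u} Λ} (s : A ⟶ B) (r : B ⟶ A)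
    (hsr : s ≫ r = 𝟙 A) (n : ℕ)
    (h : Subsingleton (((Ext ℤ (ModuleCat.{u} Λ) n).obj (Opposite.op B)).obj B)) :
    Subsingleton (((Ext ℤ (ModuleCat.{u} Λ) n).obj (Opposite.op A)).obj A) := by
  set F := Ext ℤ (ModuleCat.{u} Λ) n with hF
  have key : ∀ x : ((F.obj (Opposite.op A)).obj A),
      ((F.obj (Opposite.op A)).map r) (((F.map s.op).app B)
        (((F.obj (Opposite.op B)).map s) (((F.map r.op).app A) x))) = x := by
    intro x
    set w := ((F.map r.op).app A) x with hw
    have hnat : ((F.obj (Opposite.op B)).map s ≫ (F.map s.op).app B) w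
        = ((F.map s.op).app A ≫ (F.obj (Opposite.op A)).map s) w := by
      rw [(F.map s.op).naturality s]
    have hnat' : ((F.map s.op).app B) (((F.obj (Opposite.op B)).map s) w)
        = ((F.obj (Opposite.op A)).map s) (((F.map s.op).app A) w) := hnat
    rw [hnat']
    have hfirst : ((F.map s.op).app A) w = x := by
      rw [hw]
      have hcmp : (F.map r.op) ≫ (F.map s.op) = 𝟙 _ := by
        rw [← F.map_comp, ← op_comp, hsr, op_id, F.map_id]
      have := NatTrans.congr_app hcmp A
      calc ((F.map s.op).app A) (((F.map r.op).app A) x)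
          = ((F.map r.op ≫ F.map s.op).app A) x := rfl
        _ = ((NatTrans.id (F.obj (Opposite.op A))).app A) x := by rw [hcmp]; rfl
        _ = x := rfl
    rw [hfirst]
    calc ((F.obj (Opposite.op A)).map r) (((F.obj (Opposite.op A)).map s) x)
        = ((F.obj (Opposite.op A)).map (s ≫ r)) x := by
          rw [(F.obj (Opposite.op A)).map_comp]; rfl
      _ = x := by rw [hsr, (F.obj (Opposite.op A)).map_id]; rfl
  constructor
  intro a b
  have : ((F.obj (Opposite.op B)).map s) (((F.map r.op).app A) a)
      = ((F.obj (Opposite.op B)).map s) (((F.map r.op).app A) b) :=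
    Subsingleton.elim _ _
  rw [← key a, ← key b, this]

theorem stmt3 (K : Type u) [Field K] (Λ : Type u) [Ring Λ] [Algebra K Λ]
    [FiniteDimensional K Λ] [IsLocalRing Λ]
    (hJ : ∀ a ∈ (⊥ : Ideal Λ).jacobson, ∀ b ∈ (⊥ : Ideal Λ).jacobson, a * b = 0)
    (M : Type u) [AddCommGroup M] [Module Λ M] [Module.Finite Λ M]
    (htl : IsTorsionless Λ M)
    (hext : Subsingleton (ExtGrp Λ (ModuleCat.of Λ M) (ModuleCat.of Λ M) 1)) :
    Module.Projective Λ M := by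
  obtain ⟨n, f, hf⟩ := htl
  rcases loc_torsionless_structure hJ n M f hf with hproj | ⟨hJne, s, r, hsr⟩
  · exact hproj
  · exfalso
    -- transfer the Ext vanishing to the simple module k = Λ ⧸ J
    set kM : ModuleCat.{u} Λ := ModuleCat.of Λ (Λ ⧸ (⊥ : Ideal Λ).jacobson) with hkM
    have hcomp : ModuleCat.ofHom s ≫ ModuleCat.ofHom r = 𝟙 kM := ModuleCat.hom_ext hsr
    have hsub : Subsingleton (((Ext ℤ (ModuleCat.{u} Λ) 1).obj (Opposite.op kM)).obj kM) :=
      ext_subsingleton_retract (ModuleCat.ofHom s) (ModuleCat.ofHom r) hcomp 1 hext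
    -- the projective cover Λ → k
    haveI hPL : Projective (ModuleCat.of Λ Λ) :=
      (IsProjective.iff_projective (R := Λ) (P := Λ)).mp inferInstance
    set π : ModuleCat.of Λ Λ ⟶ kM := ModuleCat.ofHom ((⊥ : Ideal Λ).jacobson.mkQ) with hπ
    haveI hEπ : Epi π := (ModuleCat.epi_iff_surjective π).mpr
      (Submodule.mkQ_surjective _)
    -- a retraction J → k
    have hJM : ∀ a ∈ (⊥ : Ideal Λ).jacobson, ∀ m : ((⊥ : Ideal Λ).jacobson : Submodule Λ Λ),
        a • m = 0 := by
      intro a ha m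
      apply Subtype.ext
      exact hJ a ha (m : Λ) m.2
    obtain ⟨x, hxJ, hx0⟩ : ∃ x ∈ (⊥ : Ideal Λ).jacobson, x ≠ 0 := by
      by_contra hc
      push_neg at hc
      exact hJne (by
        apply le_antisymm _ bot_le
        intro y hy
        exact (Submodule.mem_bot Λ).mpr (hc y hy))
    obtain ⟨s₂, r₂, hsr₂⟩ := loc_retract (Λ := Λ)
      (M := ((⊥ : Ideal Λ).jacobson : Submodule Λ Λ)) hJM
      (x := ⟨x, hxJ⟩) (by simpa using hx0)
    set u₀ := s₂ (Submodule.Quotient.mk 1) with hu₀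
    have hr₂u₀ : r₂ u₀ = Submodule.Quotient.mk 1 :=
      congrFun (congrArg DFunLike.coe hsr₂) (Submodule.Quotient.mk 1)
    have hmk1 : (Submodule.Quotient.mk 1 : Λ ⧸ (⊥ : Ideal Λ).jacobson) ≠ 0 := by
      rw [Ne, Submodule.Quotient.mk_eq_zero]
      intro h1
      exact loc_jacobson_ne_top (Ideal.eq_top_iff_one _ |>.mpr h1)
    -- the morphism ψ : kernel π ⟶ k
    set e₀ : (LinearMap.ker ((ModuleCat.ofHom ((⊥ : Ideal Λ).jacobson.mkQ)).hom
          : (ModuleCat.of Λ Λ) →ₗ[Λ] (Λ ⧸ (⊥ : Ideal Λ).jacobson)))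
        ≃ₗ[Λ] ((⊥ : Ideal Λ).jacobson : Submodule Λ Λ) :=
      LinearEquiv.ofEq _ _ (Submodule.ker_mkQ _) with he₀
    set ψ : kernel π ⟶ kM :=
      (ModuleCat.kernelIsoKer π).hom ≫ ModuleCat.ofHom (r₂ ∘ₗ (e₀ : _ →ₗ[Λ] _)) with hψ
    obtain ⟨g, hg⟩ := ext1_lifting π hsub ψ
    -- evaluate the resulting identity
    have h2 : (ModuleCat.kernelIsoKer π).inv ≫ (kernel.ι π ≫ g)
        = (ModuleCat.kernelIsoKer π).inv ≫ ψ := by rw [hg]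
    rw [← Category.assoc, ModuleCat.kernelIsoKer_inv_kernel_ι] at h2
    rw [hψ, ← Category.assoc, Iso.inv_hom_id, Category.id_comp] at h2
    have heval : g ((e₀.symm u₀).1) = r₂ (e₀ (e₀.symm u₀)) :=
      congrFun (congrArg DFunLike.coe (congrArg ModuleCat.Hom.hom h2)) (e₀.symm u₀)
    rw [e₀.apply_symm_apply, hr₂u₀] at heval
    have hmem : ((e₀.symm u₀).1 : Λ) ∈ (⊥ : Ideal Λ).jacobson := by
      have hval : ((e₀.symm u₀).1 : Λ) = (u₀ : Λ) := rfl
      rw [hval]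
      exact u₀.2
    have hzero : g ((e₀.symm u₀).1) = 0 := quot_hom_vanish (Λ := Λ) g.hom hmem
    rw [hzero] at heval
    exact hmk1 heval.symm
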